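/- For 0 < α < 1, n ∈ ℕ, any integer d with 1 ≤ d ≤ n, and any a ∈ {0,1,...,d−1}, the sum over 0 ≤ k ≤ n with k ≡ a (mod d) of C(n,k)·α^k·(1−α)^{n−k} equals 1/d + O_α(n^{−1/2}), where the implied constant depends only on α. -/

import Mathlib

open Finset

namespace Stmt6


noncomputable def q (α : ℝ) (n k : ℕ) : ℝ := (n.choose k : ℝ) * α ^ k * (1 - α) ^ (n - k)

lemma q_nonneg {α : ℝ} (hα0 : 0 < α) (hα1 : α < 1) (n k : ℕ) : 0 ≤ q α n k := by
  have h : (0:ℝ) ≤ 1 - α := by linarith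
  have h2 : (0:ℝ) ≤ α := le_of_lt hα0
  unfold q
  positivity

lemma q_pos {α : ℝ} (hα0 : 0 < α) (hα1 : α < 1) {n k : ℕ} (hk : k ≤ n) : 0 < q α n k := by
  have h : (0:ℝ) < 1 - α := by linarith
  have hc : 0 < (n.choose k : ℝ) := by
    exact_mod_cast Nat.choose_pos hk
  unfold q
  positivity

lemma q_zero {α : ℝ} {n k : ℕ} (h : n < k) : q α n k = 0 := by
  unfold q
  rw [Nat.choose_eq_zero_of_lt h]
  simp

lemma sum_q (α : ℝ) (n : ℕ) : ∑ k ∈ range (n+1), q α n k = 1 := by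
  have h := add_pow α (1 - α) n
  have : ∑ k ∈ range (n+1), q α n k = (α + (1-α))^n := by
    rw [h]
    apply sum_congr rfl
    intro k _
    unfold q; ring
  rw [this]
  norm_num

lemma q_succ (α : ℝ) {n k : ℕ} (hk : k < n) :
    (1 - α) * (k+1) * q α n (k+1) = α * ((n - k : ℕ) : ℝ) * q α n k := by
  have h1 : ((n.choose (k+1) : ℕ) : ℝ) * (k+1) = (n.choose k : ℝ) * ((n - k : ℕ) : ℝ) := by
    exact_mod_cast Nat.choose_succ_right_eq n k
  have h2 : (1-α)^(n-k) = (1-α)^(n-(k+1)) * (1-α) := by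
    rw [← pow_succ]; congr 1; omega
  unfold q
  rw [h2, pow_succ]
  linear_combination (α^k * α * ((1-α)^(n-(k+1)) * (1-α))) * h1

/-- the mode -/
noncomputable def mo (α : ℝ) (n : ℕ) : ℕ := ⌊α * (n+1)⌋₊

lemma mo_le {α : ℝ} (hα0 : 0 < α) (hα1 : α < 1) (n : ℕ) : mo α n ≤ n := by
  have hx : α * ((n:ℝ)+1) < ((n+1 : ℕ) : ℝ) := by
    push_cast
    have : (0:ℝ) < (n:ℝ)+1 := by positivity
    nlinarith
  have h : mo α n < n + 1 := (Nat.floor_lt (by positivity)).2 hx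
  omega

lemma mono_up {α : ℝ} (hα0 : 0 < α) (hα1 : α < 1) {n i : ℕ} (hi : i < mo α n) :
    q α n i ≤ q α n (i+1) := by
  have hin : i < n := lt_of_lt_of_le hi (mo_le hα0 hα1 n)
  have key := q_succ α (n := n) (k := i) hin
  have hfl : (mo α n : ℝ) ≤ α * (n+1) := Nat.floor_le (by positivity)
  have hi1 : ((i:ℝ)+1) ≤ α * (n+1) := by
    have : ((i:ℝ)+1) ≤ (mo α n : ℝ) := by exact_mod_cast hi
    linarith
  have hcast : ((n - i : ℕ) : ℝ) = (n:ℝ) - i := by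
    rw [Nat.cast_sub (le_of_lt hin)]
  have hge : (1-α) * ((i:ℝ)+1) ≤ α * ((n - i : ℕ) : ℝ) := by
    rw [hcast]; nlinarith
  have hq := q_nonneg hα0 hα1 n i
  have hpos : (0:ℝ) < (1-α) * ((i:ℝ)+1) := by
    have : (0:ℝ) < 1 - α := by linarith
    positivity
  nlinarith [key]

lemma mono_down {α : ℝ} (hα0 : 0 < α) (hα1 : α < 1) {n i : ℕ} (hi : mo α n ≤ i) :
    q α n (i+1) ≤ q α n i := by
  by_cases hin : i < n
  · have key := q_succ α (n := n) (k := i) hin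
    have hfl : α * (n+1) < (mo α n : ℝ) + 1 := Nat.lt_floor_add_one _
    have hi1 : α * (n+1) < (i:ℝ)+1 := by
      have : (mo α n : ℝ) ≤ (i:ℝ) := by exact_mod_cast hi
      linarith
    have hcast : ((n - i : ℕ) : ℝ) = (n:ℝ) - i := by
      rw [Nat.cast_sub (le_of_lt hin)]
    have hge : α * ((n - i : ℕ) : ℝ) ≤ (1-α) * ((i:ℝ)+1) := by
      rw [hcast]; nlinarith
    have hq := q_nonneg hα0 hα1 n i
    have hpos : (0:ℝ) < (1-α) * ((i:ℝ)+1) := by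
      have : (0:ℝ) < 1 - α := by linarith
      positivity
    nlinarith [key]
  · have : n < i + 1 := by omega
    rw [q_zero this]
    exact q_nonneg hα0 hα1 n i

lemma le_mode {α : ℝ} (hα0 : 0 < α) (hα1 : α < 1) (n k : ℕ) :
    q α n k ≤ q α n (mo α n) := by
  rcases le_or_gt k (mo α n) with h | h
  · -- climb up
    have : ∀ t : ℕ, ∀ j : ℕ, j + t = mo α n → q α n j ≤ q α n (mo α n) := by
      intro t
      induction t with
      | zero => intro j hj; simp at hj; rw [hj]
      | succ t ih =>
        intro j hj
        have h1 : j < mo α n := by omega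
        calc q α n j ≤ q α n (j+1) := mono_up hα0 hα1 h1
          _ ≤ q α n (mo α n) := ih (j+1) (by omega)
    exact this (mo α n - k) k (by omega)
  · -- descend
    have : ∀ t : ℕ, q α n (mo α n + t) ≤ q α n (mo α n) := by
      intro t
      induction t with
      | zero => simp
      | succ t ih =>
        calc q α n (mo α n + (t+1)) = q α n ((mo α n + t) + 1) := by ring_nf
          _ ≤ q α n (mo α n + t) := mono_down hα0 hα1 (by omega)
          _ ≤ _ := ih
    have := this (k - mo α n)
    rwa [Nat.add_sub_cancel' (le_of_lt h)] at this



lemma tv_general (f : ℕ → ℝ) (hnn : ∀ k, 0 ≤ f k) (m : ℕ)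
    (hup : ∀ i < m, f i ≤ f (i+1)) (hdown : ∀ i, m ≤ i → f (i+1) ≤ f i) (N : ℕ) :
    ∑ t ∈ range N, |f (t+1) - f t| ≤ 2 * f m := by
  rcases le_or_gt N m with h | h
  · have : ∑ t ∈ range N, |f (t+1) - f t| = ∑ t ∈ range N, (f (t+1) - f t) := by
      apply sum_congr rfl
      intro t ht
      rw [abs_of_nonneg]
      simp only [mem_range] at ht
      have := hup t (by omega)
      linarith
    rw [this, Finset.sum_range_sub]
    have hNm : f N ≤ f m := by
      -- climb from N to m
      have : ∀ t : ℕ, ∀ j : ℕ, j + t = m → f j ≤ f m := by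
        intro t
        induction t with
        | zero => intro j hj; simp at hj; rw [hj]
        | succ t ih =>
          intro j hj
          calc f j ≤ f (j+1) := hup j (by omega)
            _ ≤ f m := ih (j+1) (by omega)
      exact this (m - N) N (by omega)
    have := hnn 0
    have := hnn m
    linarith
  · rw [← Finset.sum_range_add_sum_Ico _ (le_of_lt h)]
    have h1 : ∑ t ∈ range m, |f (t+1) - f t| = f m - f 0 := by
      have : ∑ t ∈ range m, |f (t+1) - f t| = ∑ t ∈ range m, (f (t+1) - f t) := by
        apply sum_congr rfl
        intro t ht
        simp only [mem_range] at ht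
        rw [abs_of_nonneg]
        have := hup t ht
        linarith
      rw [this, Finset.sum_range_sub]
    have h2 : ∑ t ∈ Ico m N, |f (t+1) - f t| = f m - f N := by
      rw [Finset.sum_Ico_eq_sum_range]
      have : ∑ t ∈ range (N - m), |f (m + t + 1) - f (m + t)| =
          ∑ t ∈ range (N - m), ((fun i => f (m + i)) t - (fun i => f (m + i)) (t+1)) := by
        apply sum_congr rfl
        intro t _
        simp only
        rw [abs_of_nonpos]
        · have : m + (t+1) = m + t + 1 := by omega
          rw [this]; ring
        · have := hdown (m + t) (by omega)
          linarith
      rw [this, Finset.sum_range_sub']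
      have : m + (N - m) = N := by omega
      rw [this]
      simp
    rw [h1, h2]
    have := hnn 0
    have := hnn N
    linarith

lemma sum_range_mul_eq (f : ℕ → ℝ) (B d : ℕ) :
    ∑ k ∈ range (B * d), f k = ∑ j ∈ range B, ∑ i ∈ range d, f (j * d + i) := by
  induction B with
  | zero => simp
  | succ B ih =>
    have hBd : B * d ≤ (B+1) * d := by nlinarith
    rw [← Finset.sum_range_add_sum_Ico f hBd, ih, Finset.sum_range_succ]
    congr 1
    rw [Finset.sum_Ico_eq_sum_range]
    have h1 : (B+1) * d - B * d = d := by
      have : (B+1) * d = B * d + d := by ring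
      omega
    rw [h1]

lemma abs_sub_le_tv (f : ℕ → ℝ) {x y d : ℕ} (hx : x < d) (hy : y < d) :
    |f x - f y| ≤ ∑ s ∈ range (d-1), |f (s+1) - f s| := by
  wlog hxy : x ≤ y generalizing x y
  · rw [abs_sub_comm]
    exact this hy hx (by omega)
  have htel : f y - f x = ∑ s ∈ Ico x y, (f (s+1) - f s) := by
    rw [Finset.sum_Ico_eq_sub _ hxy, Finset.sum_range_sub, Finset.sum_range_sub]
    ring
  rw [abs_sub_comm, htel]
  calc |∑ s ∈ Ico x y, (f (s+1) - f s)| ≤ ∑ s ∈ Ico x y, |f (s+1) - f s| :=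
        Finset.abs_sum_le_sum_abs _ _
    _ ≤ ∑ s ∈ range (d-1), |f (s+1) - f s| := by
        apply Finset.sum_le_sum_of_subset_of_nonneg
        · intro s hs
          simp only [mem_Ico, mem_range] at *
          omega
        · intro i _ _
          exact abs_nonneg _



lemma stirling_bounds : ∃ a : ℝ, 0 < a ∧
    (∀ m : ℕ, 1 ≤ m → a * Real.sqrt (2*m) * ((m:ℝ)/Real.exp 1)^m ≤ (m.factorial : ℝ)) ∧
    (∀ m : ℕ, 1 ≤ m → (m.factorial : ℝ) ≤
      (Real.exp 1 / Real.sqrt 2) * Real.sqrt (2*m) * ((m:ℝ)/Real.exp 1)^m) := by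
  obtain ⟨a, ha, hbd⟩ := Stirling.stirlingSeq'_bounded_by_pos_constant
  refine ⟨a, ha, ?_, ?_⟩
  · intro m hm
    have hden : 0 < Real.sqrt (2*m) * ((m:ℝ)/Real.exp 1)^m := by
      have h1 : (0:ℝ) < m := by exact_mod_cast hm
      have h2 : (0:ℝ) < Real.exp 1 := Real.exp_pos 1
      positivity
    have := hbd (m - 1)
    have hm1 : m - 1 + 1 = m := by omega
    rw [hm1] at this
    unfold Stirling.stirlingSeq at this
    rw [le_div_iff₀ hden] at this
    linarith [this]
  · intro m hm
    have hden : 0 < Real.sqrt (2*m) * ((m:ℝ)/Real.exp 1)^m := by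
      have h1 : (0:ℝ) < m := by exact_mod_cast hm
      have h2 : (0:ℝ) < Real.exp 1 := Real.exp_pos 1
      positivity
    have h2 := Stirling.stirlingSeq'_antitone (Nat.zero_le (m - 1))
    simp only [Function.comp, Nat.succ_eq_add_one] at h2
    have hm1 : m - 1 + 1 = m := by omega
    rw [hm1] at h2
    have h1 : Stirling.stirlingSeq (0 + 1) = Real.exp 1 / Real.sqrt 2 := by
      rw [zero_add, Stirling.stirlingSeq_one]
    rw [h1] at h2
    unfold Stirling.stirlingSeq at h2
    rw [div_le_iff₀ hden] at h2
    linarith [h2]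




lemma q_le_bound {α : ℝ} (hα0 : 0 < α) (hα1 : α < 1)
    (a : ℝ) (ha : 0 < a)
    (hlow : ∀ m : ℕ, 1 ≤ m → a * Real.sqrt (2*m) * ((m:ℝ)/Real.exp 1)^m ≤ (m.factorial : ℝ))
    (hup : ∀ m : ℕ, 1 ≤ m → (m.factorial : ℝ) ≤
      (Real.exp 1 / Real.sqrt 2) * Real.sqrt (2*m) * ((m:ℝ)/Real.exp 1)^m)
    {n k : ℕ} (hk1 : 1 ≤ k) (hkn : k < n) :
    q α n k ≤ (Real.exp 1 / (2 * a^2)) *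
      (Real.sqrt n / (Real.sqrt k * Real.sqrt ((n - k : ℕ) : ℝ))) := by
  have hα1' : (0:ℝ) < 1 - α := by linarith
  set r : ℕ := n - k with hr
  have hr1 : 1 ≤ r := by omega
  have hkr : k + r = n := by omega
  have hE : (0:ℝ) < Real.exp 1 := Real.exp_pos 1
  have hkpos : (0:ℝ) < k := by exact_mod_cast hk1
  have hrpos : (0:ℝ) < r := by exact_mod_cast hr1
  have hnpos : (0:ℝ) < n := by
    have : 0 < n := by omega
    exact_mod_cast this
  -- choose as factorial quotient
  have hfk : (0:ℝ) < (k.factorial : ℝ) := by exact_mod_cast k.factorial_pos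
  have hfr : (0:ℝ) < (r.factorial : ℝ) := by exact_mod_cast r.factorial_pos
  have hchoose : (n.choose k : ℝ) = (n.factorial : ℝ) / ((k.factorial : ℝ) * (r.factorial : ℝ)) := by
    rw [eq_div_iff (by positivity)]
    have := Nat.choose_mul_factorial_mul_factorial (le_of_lt hkn)
    push_cast [← this]
    ring
  have hA : (0:ℝ) ≤ (Real.exp 1 / Real.sqrt 2) * Real.sqrt (2*n) * ((n:ℝ)/Real.exp 1)^n := by
    positivity
  have hBpos : (0:ℝ) < a * Real.sqrt (2*k) * ((k:ℝ)/Real.exp 1)^k := by positivity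
  have hCpos : (0:ℝ) < a * Real.sqrt (2*r) * ((r:ℝ)/Real.exp 1)^r := by positivity
  have hchoose_le : (n.choose k : ℝ) ≤
      ((Real.exp 1 / Real.sqrt 2) * Real.sqrt (2*n) * ((n:ℝ)/Real.exp 1)^n) /
      ((a * Real.sqrt (2*k) * ((k:ℝ)/Real.exp 1)^k) *
       (a * Real.sqrt (2*r) * ((r:ℝ)/Real.exp 1)^r)) := by
    rw [hchoose]
    apply div_le_div₀ hA (hup n (by omega)) (by positivity)
    exact mul_le_mul (hlow k hk1) (hlow r hr1) (le_of_lt hCpos) (le_of_lt hfk)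
  -- simplify the RHS
  have hsq2 : Real.sqrt 2 ≠ 0 := by positivity
  have hsqk : Real.sqrt k ≠ 0 := by positivity
  have hsqr : Real.sqrt (r:ℝ) ≠ 0 := by positivity
  have he : Real.exp 1 ^ n = Real.exp 1 ^ k * Real.exp 1 ^ r := by rw [← pow_add, hkr]
  have hEq : ((Real.exp 1 / Real.sqrt 2) * Real.sqrt (2*n) * ((n:ℝ)/Real.exp 1)^n) /
      ((a * Real.sqrt (2*k) * ((k:ℝ)/Real.exp 1)^k) *
       (a * Real.sqrt (2*r) * ((r:ℝ)/Real.exp 1)^r)) =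
      (Real.exp 1 / (2 * a^2)) * (Real.sqrt n / (Real.sqrt k * Real.sqrt (r:ℝ))) *
        ((n:ℝ)^n / ((k:ℝ)^k * (r:ℝ)^r)) := by
    rw [Real.sqrt_mul (by norm_num : (0:ℝ) ≤ 2) (n:ℝ),
        Real.sqrt_mul (by norm_num : (0:ℝ) ≤ 2) (k:ℝ),
        Real.sqrt_mul (by norm_num : (0:ℝ) ≤ 2) (r:ℝ),
        div_pow, div_pow, div_pow, he]
    have h2 : Real.sqrt 2 * Real.sqrt 2 = 2 := Real.mul_self_sqrt (by norm_num)
    have h3 : Real.sqrt 2 ^ 3 = 2 * Real.sqrt 2 := by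
      rw [pow_succ, Real.sq_sqrt (by norm_num : (0:ℝ) ≤ 2)]
    field_simp
    ring_nf
    rw [Real.sq_sqrt (by norm_num : (0:ℝ) ≤ 2)]
  -- the product bound
  have hx1 : (n:ℝ)*α/k ≤ Real.exp ((n:ℝ)*α/k - 1) := by
    have := Real.add_one_le_exp ((n:ℝ)*α/(k:ℝ) - 1); linarith
  have hx1' : (0:ℝ) ≤ (n:ℝ)*α/k := by positivity
  have hp1 : ((n:ℝ)*α/k)^k ≤ Real.exp ((n:ℝ)*α - k) := by
    calc ((n:ℝ)*α/k)^k ≤ (Real.exp ((n:ℝ)*α/k - 1))^k := pow_le_pow_left₀ hx1' hx1 k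
      _ = Real.exp ((k:ℝ) * ((n:ℝ)*α/k - 1)) := (Real.exp_nat_mul _ k).symm
      _ = Real.exp ((n:ℝ)*α - k) := by congr 1; field_simp
  have hx2 : (n:ℝ)*(1-α)/r ≤ Real.exp ((n:ℝ)*(1-α)/r - 1) := by
    have := Real.add_one_le_exp ((n:ℝ)*(1-α)/(r:ℝ) - 1); linarith
  have hx2' : (0:ℝ) ≤ (n:ℝ)*(1-α)/r := by positivity
  have hp2 : ((n:ℝ)*(1-α)/r)^r ≤ Real.exp ((n:ℝ)*(1-α) - r) := by
    calc ((n:ℝ)*(1-α)/r)^r ≤ (Real.exp ((n:ℝ)*(1-α)/r - 1))^r := pow_le_pow_left₀ hx2' hx2 r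
      _ = Real.exp ((r:ℝ) * ((n:ℝ)*(1-α)/r - 1)) := (Real.exp_nat_mul _ r).symm
      _ = Real.exp ((n:ℝ)*(1-α) - r) := by congr 1; field_simp
  have hsum : ((n:ℝ)*α - k) + ((n:ℝ)*(1-α) - r) = 0 := by
    have hc : (k:ℝ) + (r:ℝ) = (n:ℝ) := by exact_mod_cast hkr
    linear_combination -hc
  have hprod : ((n:ℝ)*α/k)^k * ((n:ℝ)*(1-α)/r)^r ≤ 1 := by
    calc ((n:ℝ)*α/k)^k * ((n:ℝ)*(1-α)/r)^r
        ≤ Real.exp ((n:ℝ)*α - k) * Real.exp ((n:ℝ)*(1-α) - r) :=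
          mul_le_mul hp1 hp2 (by positivity) (le_of_lt (Real.exp_pos _))
      _ = Real.exp (((n:ℝ)*α - k) + ((n:ℝ)*(1-α) - r)) := (Real.exp_add _ _).symm
      _ = 1 := by rw [hsum, Real.exp_zero]
  have hstep : (Real.exp 1/(2*a^2)) * (Real.sqrt n/(Real.sqrt k*Real.sqrt (r:ℝ))) *
      ((n:ℝ)^n/((k:ℝ)^k*(r:ℝ)^r)) * (α^k * (1-α)^r)
      = (Real.exp 1/(2*a^2)) * (Real.sqrt n/(Real.sqrt k*Real.sqrt (r:ℝ))) *
        (((n:ℝ)*α/k)^k * (((n:ℝ)*(1-α))/r)^r) := by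
    have hn2 : (n:ℝ)^n = (n:ℝ)^k * (n:ℝ)^r := by rw [← pow_add, hkr]
    rw [hn2, div_pow, div_pow, mul_pow, mul_pow]
    field_simp
  calc q α n k = (n.choose k:ℝ) * (α^k * (1-α)^r) := by unfold q; rw [← hr]; ring
    _ ≤ (((Real.exp 1 / Real.sqrt 2) * Real.sqrt (2*n) * ((n:ℝ)/Real.exp 1)^n) /
      ((a * Real.sqrt (2*k) * ((k:ℝ)/Real.exp 1)^k) *
       (a * Real.sqrt (2*r) * ((r:ℝ)/Real.exp 1)^r))) * (α^k * (1-α)^r) :=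
        mul_le_mul_of_nonneg_right hchoose_le (by positivity)
    _ = (Real.exp 1/(2*a^2)) * (Real.sqrt n/(Real.sqrt k*Real.sqrt (r:ℝ))) *
      ((n:ℝ)^n/((k:ℝ)^k*(r:ℝ)^r)) * (α^k * (1-α)^r) := by rw [hEq]
    _ = (Real.exp 1/(2*a^2)) * (Real.sqrt n/(Real.sqrt k*Real.sqrt (r:ℝ))) *
        (((n:ℝ)*α/k)^k * (((n:ℝ)*(1-α))/r)^r) := hstep
    _ ≤ (Real.exp 1/(2*a^2)) * (Real.sqrt n/(Real.sqrt k*Real.sqrt (r:ℝ))) * 1 :=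
        mul_le_mul_of_nonneg_left hprod (by positivity)
    _ = _ := mul_one _





lemma q_mode_le {α : ℝ} (hα0 : 0 < α) (hα1 : α < 1)
    (a : ℝ) (ha : 0 < a)
    (hlow : ∀ m : ℕ, 1 ≤ m → a * Real.sqrt (2*m) * ((m:ℝ)/Real.exp 1)^m ≤ (m.factorial : ℝ))
    (hup : ∀ m : ℕ, 1 ≤ m → (m.factorial : ℝ) ≤
      (Real.exp 1 / Real.sqrt 2) * Real.sqrt (2*m) * ((m:ℝ)/Real.exp 1)^m)
    {n : ℕ} (hn1 : (2:ℝ)/α ≤ n) (hn2 : (2:ℝ)/(1-α) ≤ n) :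
    q α n (mo α n) ≤ (Real.exp 1/(2*a^2) * 2 / Real.sqrt (α*(1-α))) * (n:ℝ)^(-(1:ℝ)/2) := by
  have hα1' : (0:ℝ) < 1 - α := by linarith
  have hnpos : (0:ℝ) < n := lt_of_lt_of_le (by positivity) hn1
  have h2a : (2:ℝ) ≤ α * n := by
    rw [div_le_iff₀ hα0] at hn1; linarith
  have h2b : (2:ℝ) ≤ (1-α) * n := by
    rw [div_le_iff₀ hα1'] at hn2; linarith
  set m := mo α n with hm
  have hfl : α * ((n:ℝ)+1) < (m:ℝ)+1 := Nat.lt_floor_add_one _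
  have hmup : (m:ℝ) ≤ α*((n:ℝ)+1) := Nat.floor_le (by positivity)
  have hmlow : α*(n:ℝ)/2 ≤ (m:ℝ) := by nlinarith
  have hm1 : 1 ≤ m := by
    have : (1:ℝ) ≤ (m:ℝ) := by nlinarith
    exact_mod_cast this
  have hrlow : (1-α)*(n:ℝ)/2 ≤ (n:ℝ) - m := by nlinarith
  have hmn : m < n := by
    have : (m:ℝ) < (n:ℝ) := by nlinarith
    exact_mod_cast this
  have hb := q_le_bound hα0 hα1 a ha hlow hup hm1 hmn
  have hcast : ((n - m : ℕ):ℝ) = (n:ℝ) - m := by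
    rw [Nat.cast_sub (le_of_lt hmn)]
  have hKpos : (0:ℝ) < Real.exp 1/(2*a^2) := by positivity
  have hden : Real.sqrt (α*(1-α)) * (n:ℝ)/2 ≤ Real.sqrt m * Real.sqrt ((n - m : ℕ):ℝ) := by
    have he1 : α*(n:ℝ)/2*((1-α)*(n:ℝ)/2) = (α*(1-α))*((n:ℝ)/2)^2 := by ring
    have he2 : Real.sqrt (α*(n:ℝ)/2*((1-α)*(n:ℝ)/2)) = Real.sqrt (α*(1-α)) * ((n:ℝ)/2) := by
      rw [he1, Real.sqrt_mul (by positivity), Real.sqrt_sq (by positivity)]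
    calc Real.sqrt (α*(1-α)) * (n:ℝ)/2 = Real.sqrt (α*(n:ℝ)/2*((1-α)*(n:ℝ)/2)) := by
          rw [he2]; ring
      _ = Real.sqrt (α*(n:ℝ)/2) * Real.sqrt ((1-α)*(n:ℝ)/2) := by
          rw [← Real.sqrt_mul (by positivity)]
      _ ≤ Real.sqrt m * Real.sqrt ((n - m : ℕ):ℝ) := by
          apply mul_le_mul (Real.sqrt_le_sqrt hmlow) _ (Real.sqrt_nonneg _) (Real.sqrt_nonneg _)
          rw [hcast]
          exact Real.sqrt_le_sqrt hrlow
  have hdpos : (0:ℝ) < Real.sqrt (α*(1-α)) * (n:ℝ)/2 := by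
    have : (0:ℝ) < Real.sqrt (α*(1-α)) := Real.sqrt_pos.2 (by positivity)
    positivity
  have hstep : (Real.exp 1/(2*a^2)) * (Real.sqrt n / (Real.sqrt m * Real.sqrt ((n - m : ℕ):ℝ)))
      ≤ (Real.exp 1/(2*a^2)) * (Real.sqrt n / (Real.sqrt (α*(1-α)) * (n:ℝ)/2)) := by
    apply mul_le_mul_of_nonneg_left _ (le_of_lt hKpos)
    apply div_le_div_of_nonneg_left (Real.sqrt_nonneg _) hdpos hden
  have hrp : (n:ℝ)^(-(1:ℝ)/2) = (Real.sqrt n)⁻¹ := by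
    rw [neg_div, Real.rpow_neg (le_of_lt hnpos), ← Real.sqrt_eq_rpow]
  have hsn : Real.sqrt n * Real.sqrt n = n := Real.mul_self_sqrt (le_of_lt hnpos)
  have hsnpos : (0:ℝ) < Real.sqrt n := Real.sqrt_pos.2 hnpos
  have hfin : (Real.exp 1/(2*a^2)) * (Real.sqrt n / (Real.sqrt (α*(1-α)) * (n:ℝ)/2))
      = (Real.exp 1/(2*a^2) * 2 / Real.sqrt (α*(1-α))) * (n:ℝ)^(-(1:ℝ)/2) := by
    rw [hrp]
    have h9 : Real.sqrt n / (n:ℝ) = (Real.sqrt n)⁻¹ := by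
      rw [inv_eq_one_div, div_eq_div_iff (ne_of_gt hnpos) (ne_of_gt hsnpos), hsn]
      ring
    calc (Real.exp 1/(2*a^2)) * (Real.sqrt n / (Real.sqrt (α*(1-α)) * (n:ℝ)/2))
        = (Real.exp 1/(2*a^2) * 2 / Real.sqrt (α*(1-α))) * (Real.sqrt n / n) := by ring
      _ = _ := by rw [h9]
  calc q α n m ≤ (Real.exp 1/(2*a^2)) * (Real.sqrt n / (Real.sqrt m * Real.sqrt ((n - m : ℕ):ℝ))) := hb
    _ ≤ (Real.exp 1/(2*a^2)) * (Real.sqrt n / (Real.sqrt (α*(1-α)) * (n:ℝ)/2)) := hstep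
    _ = _ := hfin


end Stmt6
theorem stmt_6 (α : ℝ) (hα0 : 0 < α) (hα1 : α < 1) :
    ∃ C > 0, ∀ (n d a : ℕ), 1 ≤ d → d ≤ n → a < d →
      |(∑ k ∈ (range (n + 1)).filter (fun k => k % d = a),
          (n.choose k : ℝ) * α ^ k * (1 - α) ^ (n - k)) - 1 / d|
        ≤ C * (n : ℝ) ^ (-(1 : ℝ) / 2) := by
  have hα1' : (0:ℝ) < 1 - α := by linarith
  obtain ⟨b, hb, hlow, hup⟩ := Stmt6.stirling_bounds
  set K : ℝ := Real.exp 1/(2*b^2) * 2 / Real.sqrt (α*(1-α)) with hKdef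
  have hsqα : (0:ℝ) < Real.sqrt (α*(1-α)) := Real.sqrt_pos.2 (by positivity)
  have hKpos : 0 < K := by
    rw [hKdef]; positivity
  set Nr : ℝ := max ((2:ℝ)/α) (2/(1-α)) with hNrdef
  have hNrpos : (0:ℝ) < Nr := lt_of_lt_of_le (by positivity) (le_max_left _ _)
  refine ⟨2*K + Real.sqrt (Nr+1) + 1, by positivity, ?_⟩
  intro n d a hd1 hdn ha
  have hd0 : 0 < d := hd1
  have hn1 : 1 ≤ n := le_trans hd1 hdn
  have hnpos : (0:ℝ) < n := by exact_mod_cast hn1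
  have hrp : (n:ℝ)^(-(1:ℝ)/2) = (Real.sqrt n)⁻¹ := by
    rw [neg_div, Real.rpow_neg (le_of_lt hnpos), ← Real.sqrt_eq_rpow]
  have hsnpos : (0:ℝ) < Real.sqrt n := Real.sqrt_pos.2 hnpos
  have hdR : (1:ℝ) ≤ (d:ℝ) := by exact_mod_cast hd1
  have hdR0 : (0:ℝ) < (d:ℝ) := by linarith
  -- rewrite the sum using q
  have hqdef : (∑ k ∈ (range (n + 1)).filter (fun k => k % d = a),
      (n.choose k : ℝ) * α ^ k * (1 - α) ^ (n - k))
      = ∑ k ∈ (range (n + 1)).filter (fun k => k % d = a), Stmt6.q α n k := rfl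
  by_cases hbig : (2:ℝ)/α ≤ n ∧ (2:ℝ)/(1-α) ≤ n
  · -- main case
    obtain ⟨hb1, hb2⟩ := hbig
    set B : ℕ := n / d + 1 with hBdef
    have hnB : n + 1 ≤ B * d := by
      have h : n < B * d := by
        rw [hBdef]
        exact (Nat.div_lt_iff_lt_mul hd0).1 (by omega)
      omega
    have hsub : ∑ k ∈ (range (n + 1)).filter (fun k => k % d = a), Stmt6.q α n k
        = ∑ k ∈ (range (B * d)).filter (fun k => k % d = a), Stmt6.q α n k := by
      apply Finset.sum_subset
      · intro x hx
        simp only [mem_filter, mem_range] at hx ⊢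
        exact ⟨by omega, hx.2⟩
      · intro x hx hnx
        simp only [mem_filter, mem_range] at hx hnx
        have hxn : n < x := by
          by_contra h
          push_neg at h
          exact hnx ⟨by omega, hx.2⟩
        exact Stmt6.q_zero hxn
    have hbij : ∑ k ∈ (range (B * d)).filter (fun k => k % d = a), Stmt6.q α n k
        = ∑ j ∈ range B, Stmt6.q α n (j * d + a) := by
      apply Finset.sum_nbij' (fun k => k / d) (fun j => j * d + a)
      · intro k hk
        simp only [mem_filter, mem_range] at hk ⊢
        exact (Nat.div_lt_iff_lt_mul hd0).2 hk.1
      · intro j hj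
        simp only [mem_filter, mem_range] at hj ⊢
        constructor
        · have h1 : j + 1 ≤ B := hj
          have h2 : (j + 1) * d ≤ B * d := Nat.mul_le_mul_right d h1
          have h3 : j * d + a < (j + 1) * d := by
            have : (j+1)*d = j*d + d := by ring
            omega
          omega
        · rw [add_comm, Nat.add_mul_mod_self_right, Nat.mod_eq_of_lt ha]
      · intro k hk
        simp only [mem_filter, mem_range] at hk
        calc k / d * d + a = d * (k / d) + k % d := by rw [mul_comm, hk.2]
          _ = k := Nat.div_add_mod k d
      · intro j _
        rw [add_comm, Nat.add_mul_div_right _ _ hd0, Nat.div_eq_of_lt ha, zero_add]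
      · intro k hk
        simp only [mem_filter, mem_range] at hk
        have : k / d * d + a = k := by
          calc k / d * d + a = d * (k / d) + k % d := by rw [mul_comm, hk.2]
            _ = k := Nat.div_add_mod k d
        rw [this]
    have hone : ∑ j ∈ range B, ∑ i ∈ range d, Stmt6.q α n (j * d + i) = 1 := by
      rw [← Stmt6.sum_range_mul_eq]
      have hss := Finset.sum_subset (Finset.range_subset_range.2 hnB)
        (fun x hx hnx => Stmt6.q_zero (by
          simp only [mem_range] at hx hnx
          omega) : ∀ x ∈ range (B*d), x ∉ range (n+1) → Stmt6.q α n x = 0)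
      rw [← hss, Stmt6.sum_q]
    have hid : (∑ j ∈ range B, Stmt6.q α n (j * d + a)) - 1 / d
        = (1/(d:ℝ)) * ∑ j ∈ range B,
            ((d:ℝ) * Stmt6.q α n (j * d + a) - ∑ i ∈ range d, Stmt6.q α n (j * d + i)) := by
      rw [Finset.sum_sub_distrib, ← Finset.mul_sum, hone]
      field_simp
    set V : ℕ → ℝ := fun j => ∑ s ∈ range (d - 1),
        |Stmt6.q α n (j * d + (s+1)) - Stmt6.q α n (j * d + s)| with hVdef
    have habs : |∑ j ∈ range B,
        ((d:ℝ) * Stmt6.q α n (j * d + a) - ∑ i ∈ range d, Stmt6.q α n (j * d + i))|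
        ≤ ∑ j ∈ range B, (d:ℝ) * V j := by
      calc |∑ j ∈ range B, ((d:ℝ) * Stmt6.q α n (j * d + a) - ∑ i ∈ range d, Stmt6.q α n (j * d + i))|
          ≤ ∑ j ∈ range B, |(d:ℝ) * Stmt6.q α n (j * d + a) - ∑ i ∈ range d, Stmt6.q α n (j * d + i)| :=
            Finset.abs_sum_le_sum_abs _ _
        _ ≤ ∑ j ∈ range B, (d:ℝ) * V j := by
            apply Finset.sum_le_sum
            intro j _
            have hconst : (d:ℝ) * Stmt6.q α n (j * d + a)
                = ∑ _i ∈ range d, Stmt6.q α n (j * d + a) := by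
              rw [Finset.sum_const, card_range, nsmul_eq_mul]
            rw [hconst, ← Finset.sum_sub_distrib]
            calc |∑ i ∈ range d, (Stmt6.q α n (j * d + a) - Stmt6.q α n (j * d + i))|
                ≤ ∑ i ∈ range d, |Stmt6.q α n (j * d + a) - Stmt6.q α n (j * d + i)| :=
                  Finset.abs_sum_le_sum_abs _ _
              _ ≤ ∑ _i ∈ range d, V j := by
                  apply Finset.sum_le_sum
                  intro i hi
                  simp only [mem_range] at hi
                  exact Stmt6.abs_sub_le_tv (fun s => Stmt6.q α n (j * d + s)) ha hi
              _ = (d:ℝ) * V j := by rw [Finset.sum_const, card_range, nsmul_eq_mul]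
    have hVtv : ∑ j ∈ range B, V j ≤ 2 * Stmt6.q α n (Stmt6.mo α n) := by
      calc ∑ j ∈ range B, V j
          ≤ ∑ j ∈ range B, ∑ s ∈ range d,
              |Stmt6.q α n (j * d + s + 1) - Stmt6.q α n (j * d + s)| := by
            apply Finset.sum_le_sum
            intro j _
            apply Finset.sum_le_sum_of_subset_of_nonneg
            · exact Finset.range_subset_range.2 (by omega)
            · intro i _ _
              exact abs_nonneg _
        _ = ∑ t ∈ range (B * d), |Stmt6.q α n (t + 1) - Stmt6.q α n t| :=
            (Stmt6.sum_range_mul_eq (fun t => |Stmt6.q α n (t + 1) - Stmt6.q α n t|) B d).symm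
        _ ≤ 2 * Stmt6.q α n (Stmt6.mo α n) := by
            apply Stmt6.tv_general
            · exact Stmt6.q_nonneg hα0 hα1 n
            · intro i hi
              exact Stmt6.mono_up hα0 hα1 hi
            · intro i hi
              exact Stmt6.mono_down hα0 hα1 hi
    have hmode := Stmt6.q_mode_le hα0 hα1 b hb hlow hup hb1 hb2
    calc |(∑ k ∈ (range (n + 1)).filter (fun k => k % d = a),
          (n.choose k : ℝ) * α ^ k * (1 - α) ^ (n - k)) - 1 / d|
        = |(∑ j ∈ range B, Stmt6.q α n (j * d + a)) - 1 / d| := by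
          rw [hqdef, hsub, hbij]
      _ = (1/(d:ℝ)) * |∑ j ∈ range B,
            ((d:ℝ) * Stmt6.q α n (j * d + a) - ∑ i ∈ range d, Stmt6.q α n (j * d + i))| := by
          rw [hid, abs_mul, abs_of_nonneg (by positivity : (0:ℝ) ≤ 1/(d:ℝ))]
      _ ≤ (1/(d:ℝ)) * ∑ j ∈ range B, (d:ℝ) * V j :=
          mul_le_mul_of_nonneg_left habs (by positivity)
      _ = ∑ j ∈ range B, V j := by
          rw [← Finset.mul_sum]
          field_simp
      _ ≤ 2 * Stmt6.q α n (Stmt6.mo α n) := hVtv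
      _ ≤ 2 * (K * (n:ℝ)^(-(1:ℝ)/2)) := by
          have : Stmt6.q α n (Stmt6.mo α n) ≤ K * (n:ℝ)^(-(1:ℝ)/2) := hmode
          linarith
      _ ≤ (2*K + Real.sqrt (Nr+1) + 1) * (n:ℝ)^(-(1:ℝ)/2) := by
          have hnn : (0:ℝ) ≤ (n:ℝ)^(-(1:ℝ)/2) := by
            rw [hrp]; positivity
          have hsq : (0:ℝ) ≤ Real.sqrt (Nr+1) := Real.sqrt_nonneg _
          nlinarith
  · -- small n case
    have hnNr : (n:ℝ) < Nr := by
      rcases not_and_or.1 hbig with h | h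
      · push_neg at h
        exact lt_of_lt_of_le h (le_max_left _ _)
      · push_neg at h
        exact lt_of_lt_of_le h (le_max_right _ _)
    set S := ∑ k ∈ (range (n + 1)).filter (fun k => k % d = a), Stmt6.q α n k with hS
    have hS0 : 0 ≤ S := Finset.sum_nonneg (fun k _ => Stmt6.q_nonneg hα0 hα1 n k)
    have hS1 : S ≤ 1 := by
      calc S ≤ ∑ k ∈ range (n+1), Stmt6.q α n k := by
            apply Finset.sum_le_sum_of_subset_of_nonneg (Finset.filter_subset _ _)
            intro i _ _
            exact Stmt6.q_nonneg hα0 hα1 n i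
        _ = 1 := Stmt6.sum_q α n
    have hd2 : (0:ℝ) < 1/(d:ℝ) := by positivity
    have hd3 : 1/(d:ℝ) ≤ 1 := by
      rw [div_le_one hdR0]; exact hdR
    have htriv : |S - 1/(d:ℝ)| ≤ 1 := abs_le.2 ⟨by linarith, by linarith⟩
    have hsqle : Real.sqrt n ≤ Real.sqrt (Nr + 1) := Real.sqrt_le_sqrt (by linarith)
    have hone_le : (1:ℝ) ≤ Real.sqrt (Nr+1) * (Real.sqrt n)⁻¹ := by
      rw [← div_eq_mul_inv, le_div_iff₀ hsnpos, one_mul]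
      exact hsqle
    rw [hqdef]
    calc |S - 1/(d:ℝ)| ≤ 1 := htriv
      _ ≤ Real.sqrt (Nr+1) * (Real.sqrt n)⁻¹ := hone_le
      _ ≤ (2*K + Real.sqrt (Nr+1) + 1) * (n:ℝ)^(-(1:ℝ)/2) := by
          rw [hrp]
          have h1 : (0:ℝ) ≤ (Real.sqrt n)⁻¹ := by positivity
          nlinarith
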